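/- Let ψ be the characteristic exponent of a Lévy process with generator L_ψ. If the zero set {ψ = 0} contains a nonzero element h, then L_ψ fails the Liouville property: there exists a nonconstant bounded function f (e.g. f(x) = e^{-ih·x}, or its real part) with L_ψ f = 0 in the sense of distributions. -/

import Mathlib

open MeasureTheory SchwartzMap
open scoped ComplexOrder BigOperators
open scoped FourierTransform RealInnerProductSpace
noncomputable section

/-- A continuous negative definite function. -/
def IsCNDF {d : ℕ} (ψ : EuclideanSpace ℝ (Fin d) → ℂ) : Prop :=
  Continuous ψ ∧ ψ 0 = 0 ∧
    ∀ t : ℝ, 0 ≤ t → ∀ (m : ℕ) (ξ : Fin m → EuclideanSpace ℝ (Fin d)) (c : Fin m → ℂ),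
      0 ≤ ∑ j, ∑ k, c j * (starRingEnd ℂ) (c k) * Complex.exp (-(t : ℂ) * ψ (ξ j - ξ k))

/-- The adjoint Lévy operator `L_{ψ̄} φ`, i.e. the pseudo-differential operator with
symbol `-ψ̄` applied to a test function `φ`:
`L_{ψ̄} φ (x) = ∫ e^{i x·ξ} (-ψ̄(ξ)) (2π)^{-d} (∫ e^{-i y·ξ} φ(y) dy) dξ`. -/
def adjLevyOp {d : ℕ} (ψ : EuclideanSpace ℝ (Fin d) → ℂ)
    (φ : SchwartzMap (EuclideanSpace ℝ (Fin d)) ℂ)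
    (x : EuclideanSpace ℝ (Fin d)) : ℂ :=
  ∫ ξ, Complex.exp (Complex.I * ((inner ℝ x ξ : ℝ) : ℂ)) * (-(starRingEnd ℂ) (ψ ξ)) *
    ((((2 * Real.pi) ^ d : ℝ) : ℂ)⁻¹ *
      ∫ y, Complex.exp (-(Complex.I * ((inner ℝ y ξ : ℝ) : ℂ))) * φ y)

set_option maxHeartbeats 1000000 in
/-- If the symbol has a nontrivial zero, the Liouville property fails: there is a
nonconstant bounded solution of `L_ψ f = 0`. -/
theorem not_liouville_of_nontrivial_zero {d : ℕ}
    (ψ : EuclideanSpace ℝ (Fin d) → ℂ) (hψ : IsCNDF ψ)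
    (h : EuclideanSpace ℝ (Fin d)) (hh : h ≠ 0) (hψh : ψ h = 0) :
    ∃ f : EuclideanSpace ℝ (Fin d) → ℂ, Continuous f ∧ (∀ x, ‖f x‖ ≤ 1) ∧
      (∃ x y, f x ≠ f y) ∧
      ∀ φ : SchwartzMap (EuclideanSpace ℝ (Fin d)) ℂ, HasCompactSupport ⇑φ →
        ∫ x, f x * adjLevyOp ψ φ x = 0 := by
  obtain ⟨hψc, hψ0, -⟩ := hψ
  have hVd : Module.finrank ℝ (EuclideanSpace ℝ (Fin d)) = d := finrank_euclideanSpace_fin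
  have h2π : (0:ℝ) < 2 * Real.pi := by positivity
  have h2π' : (2 * Real.pi) ≠ 0 := ne_of_gt h2π
  have h2πd : ((2 * Real.pi) ^ d : ℝ) ≠ 0 := pow_ne_zero _ h2π'
  set f : EuclideanSpace ℝ (Fin d) → ℂ := fun x => Complex.exp (-(Complex.I * ((inner ℝ h x : ℝ) : ℂ))) with hf
  have hfc : Continuous f := by
    apply Complex.continuous_exp.comp
    exact (continuous_const.mul (Complex.continuous_ofReal.comp (continuous_const.inner continuous_id))).neg
  refine ⟨f, hfc, ?_, ?_, ?_⟩
  · intro x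
    simp [hf, Complex.norm_exp]
  · refine ⟨(Real.pi / ‖h‖ ^ 2) • h, 0, ?_⟩
    have hn : ‖h‖ ≠ 0 := norm_ne_zero_iff.2 hh
    have h1 : (inner ℝ h ((Real.pi / ‖h‖ ^ 2) • h) : ℝ) = Real.pi := by
      rw [real_inner_smul_right, real_inner_self_eq_norm_sq]
      field_simp
    have h2 : (inner ℝ h (0:EuclideanSpace ℝ (Fin d)) : ℝ) = 0 := inner_zero_right h
    simp only [hf, h1, h2]
    rw [show -(Complex.I * (Real.pi:ℂ)) = -((Real.pi:ℂ) * Complex.I) by ring,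
      Complex.exp_neg, Complex.exp_pi_mul_I]
    norm_num
  · intro φ _
    set g : EuclideanSpace ℝ (Fin d) → ℂ := fun ξ => (-(starRingEnd ℂ) (ψ ξ)) *
      ((((2 * Real.pi) ^ d : ℝ) : ℂ)⁻¹ *
        ∫ y, Complex.exp (-(Complex.I * ((inner ℝ y ξ : ℝ) : ℂ))) * φ y) with hg
    have hA : ∀ x, adjLevyOp ψ φ x
        = ∫ ξ, Complex.exp (Complex.I * ((inner ℝ x ξ : ℝ) : ℂ)) * g ξ := by
      intro x
      simp only [adjLevyOp, hg, mul_assoc]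
    by_cases hgi : Integrable g volume
    · -- main case
      set G : EuclideanSpace ℝ (Fin d) → ℂ := fun u => g ((2 * Real.pi) • u) with hGdef
      have hGi : Integrable G volume := hgi.comp_smul h2π'
      -- adjLevyOp equals scaled inverse Fourier transform of G
      have hinv : ∀ x, adjLevyOp ψ φ x = ((2 * Real.pi) ^ d : ℝ) • 𝓕⁻ G x := by
        intro x
        rw [hA x, Real.fourierInv_eq']
        have hs := MeasureTheory.Measure.integral_comp_smul (volume : Measure (EuclideanSpace ℝ (Fin d)))
          (fun ξ => Complex.exp (Complex.I * ((inner ℝ x ξ : ℝ) : ℂ)) * g ξ) (2 * Real.pi)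
        rw [hVd] at hs
        have habs : |((2 * Real.pi) ^ d : ℝ)⁻¹| = ((2 * Real.pi) ^ d : ℝ)⁻¹ := by
          rw [abs_of_nonneg]; positivity
        rw [habs] at hs
        have : (∫ ξ : EuclideanSpace ℝ (Fin d), Complex.exp (Complex.I * ((inner ℝ x ξ : ℝ) : ℂ)) * g ξ)
            = ((2 * Real.pi) ^ d : ℝ) • ∫ u : EuclideanSpace ℝ (Fin d),
                Complex.exp (Complex.I * ((inner ℝ x ((2 * Real.pi) • u) : ℝ) : ℂ))
                  * g ((2 * Real.pi) • u) := by
          rw [hs, smul_smul, mul_inv_cancel₀ h2πd, one_smul]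
        rw [this]
        congr 1
        apply integral_congr_ae
        filter_upwards with u
        have hip : (inner ℝ x ((2 * Real.pi) • u) : ℝ) = 2 * Real.pi * (inner ℝ u x : ℝ) := by
          rw [real_inner_smul_right, real_inner_comm]
        rw [hip, smul_eq_mul]
        congr 1
        push_cast
        ring
      -- the key Fourier-transform identity
      have key : (∫ x, f x * adjLevyOp ψ φ x)
          = ((2 * Real.pi) ^ d : ℝ) • 𝓕 (𝓕⁻ G) ((2 * Real.pi)⁻¹ • h) := by
        rw [Real.fourier_eq', ← integral_smul]
        apply integral_congr_ae
        filter_upwards with x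
        rw [hinv x, mul_smul_comm, smul_eq_mul]
        congr 2
        have hip : (inner ℝ x ((2 * Real.pi)⁻¹ • h) : ℝ) = (2 * Real.pi)⁻¹ * (inner ℝ h x : ℝ) := by
          rw [real_inner_smul_right, real_inner_comm]
        rw [hip, hf]
        rw [show -2 * Real.pi * ((2 * Real.pi)⁻¹ * (inner ℝ h x : ℝ))
            = -(inner ℝ h x : ℝ) by field_simp]
        push_cast
        ring
      by_cases hFA : Integrable (fun x => f x * adjLevyOp ψ φ x) volume
      · -- then 𝓕⁻ G is integrable; apply Fourier inversion
        have hstep : Integrable (fun x => f x * 𝓕⁻ G x) volume := by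
          have h1 : Integrable (fun x => (((2 * Real.pi) ^ d : ℝ)⁻¹)
              • (f x * adjLevyOp ψ φ x)) volume := hFA.smul (((2 * Real.pi) ^ d : ℝ)⁻¹)
          have h2 : (fun x => (((2 * Real.pi) ^ d : ℝ)⁻¹) • (f x * adjLevyOp ψ φ x))
              = fun x => f x * 𝓕⁻ G x := by
            funext x
            rw [hinv x, mul_smul_comm, smul_smul, inv_mul_cancel₀ h2πd, one_smul]
          rwa [h2] at h1
        have hFinv : Integrable (𝓕⁻ G) volume := by
          have hm : AEStronglyMeasurable
              (fun x : EuclideanSpace ℝ (Fin d) => Complex.exp (Complex.I * ((inner ℝ h x : ℝ) : ℂ))) volume := by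
            apply Continuous.aestronglyMeasurable
            exact Complex.continuous_exp.comp
              (continuous_const.mul (Complex.continuous_ofReal.comp (continuous_const.inner continuous_id)))
          have := hstep.bdd_mul hm (c := 1) (Filter.Eventually.of_forall fun x => by
            simp [Complex.norm_exp])
          have heq : (fun x => Complex.exp (Complex.I * ((inner ℝ h x : ℝ) : ℂ))
              * (f x * 𝓕⁻ G x)) = 𝓕⁻ G := by
            funext x
            rw [hf, ← mul_assoc, ← Complex.exp_add]
            simp
          rwa [heq] at this
        have hFG : Integrable (𝓕 G) volume := by
          have heq : 𝓕 G = fun w => 𝓕⁻ G (-w) := by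
            funext w
            rw [Real.fourierInv_eq_fourier_neg, neg_neg]
          rw [heq]
          exact hFinv.comp_neg
        -- continuity of g (hence of G)
        have hFφc : Continuous (𝓕 ⇑φ) := by
          have hL : Continuous fun p : (EuclideanSpace ℝ (Fin d)) × (EuclideanSpace ℝ (Fin d)) =>
              (innerₗ (EuclideanSpace ℝ (Fin d))) p.1 p.2 := by
            show Continuous fun p : (EuclideanSpace ℝ (Fin d)) × (EuclideanSpace ℝ (Fin d)) =>
              (inner ℝ p.1 p.2 : ℝ)
            exact continuous_inner (𝕜 := ℝ)
          have h0 : (𝓕 ⇑φ) = VectorFourier.fourierIntegral (Real.fourierChar) volume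
              (innerₗ (EuclideanSpace ℝ (Fin d))) ⇑φ := by
            funext w
            rfl
          rw [h0]
          exact VectorFourier.fourierIntegral_continuous Real.continuous_fourierChar hL (φ.integrable (μ := volume))
        have hinner_eq : (fun ξ : EuclideanSpace ℝ (Fin d) => ∫ y, Complex.exp (-(Complex.I * ((inner ℝ y ξ : ℝ) : ℂ)))
            * φ y) = fun ξ => 𝓕 ⇑φ ((2 * Real.pi)⁻¹ • ξ) := by
          funext ξ
          rw [Real.fourier_eq']
          apply integral_congr_ae
          filter_upwards with y
          have hip : (inner ℝ y ((2 * Real.pi)⁻¹ • ξ) : ℝ) = (2 * Real.pi)⁻¹ * (inner ℝ y ξ : ℝ) := by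
            rw [real_inner_smul_right]
          rw [hip, smul_eq_mul]
          congr 1
          rw [show -2 * Real.pi * ((2 * Real.pi)⁻¹ * (inner ℝ y ξ : ℝ))
              = -(inner ℝ y ξ : ℝ) by field_simp]
          push_cast
          ring
        have hgc : Continuous g := by
          rw [hg]
          apply Continuous.mul
          · exact (Complex.continuous_conj.comp hψc).neg
          · apply Continuous.mul continuous_const
            rw [hinner_eq]
            exact hFφc.comp (continuous_const_smul _)
        have hGc : Continuous G := hgc.comp (continuous_const_smul _)
        rw [key, hGi.fourier_fourierInv_eq hFG hGc.continuousAt]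
        have : G ((2 * Real.pi)⁻¹ • h) = g h := by
          rw [hGdef]
          simp only [smul_smul, mul_inv_cancel₀ h2π', one_smul]
        rw [this, hg]
        simp [hψh]
      · exact integral_undef hFA
    · -- junk case : the symbol integral diverges, adjLevyOp is identically 0
      have hz : ∀ x, adjLevyOp ψ φ x = 0 := by
        intro x
        rw [hA x]
        apply integral_undef
        intro hint
        apply hgi
        have hm : AEStronglyMeasurable
            (fun ξ : EuclideanSpace ℝ (Fin d) => Complex.exp (-(Complex.I * ((inner ℝ x ξ : ℝ) : ℂ)))) volume := by
          apply Continuous.aestronglyMeasurable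
          exact Complex.continuous_exp.comp
            (continuous_const.mul (Complex.continuous_ofReal.comp (continuous_const.inner continuous_id))).neg
        have := hint.bdd_mul hm (c := 1) (Filter.Eventually.of_forall fun ξ => by
          simp [Complex.norm_exp])
        have heq : (fun ξ => Complex.exp (-(Complex.I * ((inner ℝ x ξ : ℝ) : ℂ)))
            * (Complex.exp (Complex.I * ((inner ℝ x ξ : ℝ) : ℂ)) * g ξ)) = g := by
          funext ξ
          rw [← mul_assoc, ← Complex.exp_add]
          simp
        rwa [heq] at this
      simp [hz]
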